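/- Let D be the Toeplitz digraph of T_n⟨S;T⟩ with max S + min T ≤ n and min S + max T ≤ n, and let d = gcd{s + t : s ∈ S, t ∈ T}. Then there exists a positive integer M such that for every integer i ≥ M one has P_i = Q_i = R_i. -/

import Mathlib

/-- The Toeplitz digraph of `T_n⟨S;T⟩`: vertices are integers in `[1, n]`, and
there is an arc `(u, v)` iff `v − u ∈ S` or `u − v ∈ T`. -/
def ToepArc (n : ℕ) (S T : Finset ℕ) (u v : ℤ) : Prop :=
  u ∈ Finset.Icc (1 : ℤ) (n : ℤ) ∧ v ∈ Finset.Icc (1 : ℤ) (n : ℤ) ∧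
    ((∃ s ∈ S, v = u + (s : ℤ)) ∨ (∃ t ∈ T, v = u - (t : ℤ)))

/-- There is a directed `(u,v)`-walk of length `m` in the Toeplitz digraph. -/
def HasWalk (n : ℕ) (S T : Finset ℕ) (m : ℕ) (u v : ℤ) : Prop :=
  ∃ w : ℕ → ℤ, w 0 = u ∧ w m = v ∧ ∀ i < m, ToepArc n S T (w i) (w (i + 1))

lemma hasWalk_zero (n : ℕ) (S T : Finset ℕ) (u : ℤ) : HasWalk n S T 0 u u :=
  ⟨fun _ => u, rfl, rfl, fun i hi => absurd hi (Nat.not_lt_zero i)⟩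

lemma hasWalk_cons {n : ℕ} {S T : Finset ℕ} {m : ℕ} {u u₁ v : ℤ}
    (h1 : ToepArc n S T u u₁) (h2 : HasWalk n S T m u₁ v) :
    HasWalk n S T (m + 1) u v := by
  obtain ⟨w, hw0, hwm, hwa⟩ := h2
  refine ⟨fun q => if q = 0 then u else w (q - 1), rfl, by simp [hwm], ?_⟩
  intro i hi
  rcases Nat.eq_zero_or_pos i with rfl | hpos
  · simpa [hw0] using h1
  · have h1i : i ≠ 0 := hpos.ne'
    have : i - 1 < m := by omega
    have := hwa (i - 1) this
    simpa [h1i, Nat.sub_add_cancel hpos] using this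

lemma hasWalk_trans {n : ℕ} {S T : Finset ℕ} {m m' : ℕ} {u v x : ℤ}
    (h1 : HasWalk n S T m u x) (h2 : HasWalk n S T m' x v) :
    HasWalk n S T (m + m') u v := by
  obtain ⟨w1, h10, h1m, h1a⟩ := h1
  obtain ⟨w2, h20, h2m, h2a⟩ := h2
  refine ⟨fun q => if q < m then w1 q else w2 (q - m), ?_, ?_, ?_⟩
  · rcases Nat.eq_zero_or_pos m with rfl | hm
    · simpa using h20.trans (h10 ▸ h1m.symm ▸ rfl)
    · simpa [hm] using h10
  · have : ¬ (m + m' < m) := by omega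
    simpa [this, Nat.add_sub_cancel_left] using h2m
  · intro i hi
    by_cases hip : i + 1 < m
    · have : i < m := by omega
      simpa [this, hip] using h1a i this
    · by_cases hi' : i < m
      · have him : i + 1 = m := by omega
        have := h1a i hi'
        have hx : w2 (i + 1 - m) = w1 (i+1) := by
          rw [him]; simp [h20, ← h1m]
        show ToepArc n S T (if i < m then w1 i else w2 (i - m)) (if i + 1 < m then w1 (i+1) else w2 (i+1-m))
        rw [if_pos hi', if_neg hip, hx]; exact this
      · have h1 : i - m < m' := by omega
        have := h2a (i - m) h1
        have he : i + 1 - m = i - m + 1 := by omega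
        simpa [hi', hip, he] using this

/-- Two-letter scheduling: a walk using `A` up-steps `σ` and `B` down-steps `τ`. -/
lemma swalkCount {n σ τ : ℕ} {S T : Finset ℕ} (hσS : σ ∈ S) (hτT : τ ∈ T)
    (hσ1 : 1 ≤ σ) (hτ1 : 1 ≤ τ) (hστ : σ + τ ≤ n) :
    ∀ (m A B : ℕ) (u v : ℤ), A + B = m → u ∈ Finset.Icc (1 : ℤ) (n : ℤ) →
      v ∈ Finset.Icc (1 : ℤ) (n : ℤ) → v = u + (A : ℤ) * σ - (B : ℤ) * τ →
      HasWalk n S T m u v := by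
  intro m
  induction m with
  | zero =>
    intro A B u v hAB hu hv hveq
    have hA : A = 0 := by omega
    have hB : B = 0 := by omega
    subst hA; subst hB
    simp only [Nat.cast_zero, zero_mul, add_zero, sub_zero] at hveq
    rw [hveq]; exact hasWalk_zero n S T u
  | succ m ih =>
    intro A B u v hAB hu hv hveq
    simp only [Finset.mem_Icc] at hu hv
    rcases Nat.eq_zero_or_pos A with hA | hA
    · -- all down steps
      have hB : B = m + 1 := by omega
      have hv' : v = u - (B:ℤ) * τ := by rw [hveq, hA]; push_cast; ring
      have hu1 : u - τ ≥ 1 := by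
        have : (B:ℤ) * τ ≥ 1 * τ := by
          apply mul_le_mul_of_nonneg_right _ (by positivity)
          exact_mod_cast by omega
        omega
      have harc : ToepArc n S T u (u - τ) := by
        refine ⟨by simp [Finset.mem_Icc]; omega, by simp [Finset.mem_Icc]; constructor <;> omega, Or.inr ⟨τ, hτT, rfl⟩⟩
      refine hasWalk_cons harc (ih 0 m (u - τ) v (by omega) ?_ ?_ ?_)
      · simp [Finset.mem_Icc]; omega
      · simp [Finset.mem_Icc]; omega
      · rw [hv', hB]; push_cast; ring
    · by_cases hup : u + σ ≤ n
      · -- up step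
        have harc : ToepArc n S T u (u + σ) := by
          refine ⟨by simp [Finset.mem_Icc]; omega, by simp [Finset.mem_Icc]; constructor <;> omega, Or.inl ⟨σ, hσS, rfl⟩⟩
        refine hasWalk_cons harc (ih (A-1) B (u + σ) v (by omega) ?_ ?_ ?_)
        · simp [Finset.mem_Icc]; omega
        · simp [Finset.mem_Icc]; omega
        · rw [hveq]
          have : ((A - 1 : ℕ) : ℤ) = (A:ℤ) - 1 := by
            have := hA; push_cast [Nat.cast_sub (by omega : 1 ≤ A)]; ring
          rw [this]; push_cast; ring
      · -- must step down
        have hB : 1 ≤ B := by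
          by_contra hB0
          have hB' : B = 0 := by omega
          have : v = u + (A:ℤ)*σ := by rw [hveq, hB']; push_cast; ring
          have : (A:ℤ)*σ ≥ 1 * σ := by
            apply mul_le_mul_of_nonneg_right _ (by positivity)
            exact_mod_cast by omega
          omega
        have hu1 : u - τ ≥ 1 := by omega
        have harc : ToepArc n S T u (u - τ) := by
          refine ⟨by simp [Finset.mem_Icc]; omega, by simp [Finset.mem_Icc]; constructor <;> omega, Or.inr ⟨τ, hτT, rfl⟩⟩
        refine hasWalk_cons harc (ih A (B-1) (u - τ) v (by omega) ?_ ?_ ?_)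
        · simp [Finset.mem_Icc]; omega
        · simp [Finset.mem_Icc]; omega
        · rw [hveq]
          have : ((B - 1 : ℕ) : ℤ) = (B:ℤ) - 1 := by
            push_cast [Nat.cast_sub (by omega : 1 ≤ B)]; ring
          rw [this]; push_cast; ring

/-- Flexible two-letter walk: only the length residue matters once `m ≥ n - 1`. -/
lemma swalk {n σ τ : ℕ} {S T : Finset ℕ} (hσS : σ ∈ S) (hτT : τ ∈ T)
    (hσ1 : 1 ≤ σ) (hτ1 : 1 ≤ τ) (hστ : σ + τ ≤ n)
    {m : ℕ} {u v : ℤ} (hm : (n:ℤ) - 1 ≤ (m:ℤ))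
    (hu : u ∈ Finset.Icc (1 : ℤ) (n : ℤ)) (hv : v ∈ Finset.Icc (1 : ℤ) (n : ℤ))
    (hdvd : ((σ:ℤ) + τ) ∣ (v - u + (m:ℤ) * τ)) :
    HasWalk n S T m u v := by
  set g : ℤ := (σ:ℤ) + τ with hg
  have hg0 : 0 < g := by positivity
  obtain ⟨Az, hAz⟩ := hdvd
  simp only [Finset.mem_Icc] at hu hv
  have hn1 : (1:ℤ) ≤ n := le_trans hu.1 hu.2
  have hAz0 : 0 ≤ Az := by
    nlinarith [hAz, hu.1, hu.2, hv.1, hv.2, hg0]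
  have hAzm : Az ≤ (m:ℤ) := by
    nlinarith [hAz, hu.1, hu.2, hv.1, hv.2]
  set A : ℕ := Az.toNat with hA
  have hAc : (A:ℤ) = Az := Int.toNat_of_nonneg hAz0
  have hAm : A ≤ m := by omega
  refine swalkCount hσS hτT hσ1 hτ1 hστ m A (m - A) u v (by omega)
    (by simp [Finset.mem_Icc]; omega) (by simp [Finset.mem_Icc]; omega) ?_
  have : ((m - A : ℕ) : ℤ) = (m:ℤ) - A := by push_cast [Nat.cast_sub hAm]; ring
  rw [this, hAc]
  nlinarith [hAz]

/-- Solve `m*τ ≡ a (mod σ+τ)` with `m` a natural number in `[n-1, n+σ+τ]`,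
provided `gcd σ τ ∣ a`. -/
lemma solve_length (n σ τ : ℕ) (hn : 1 ≤ n) (hσ1 : 1 ≤ σ) (hτ1 : 1 ≤ τ) (a : ℤ)
    (ha : ((Nat.gcd σ τ : ℕ) : ℤ) ∣ a) :
    ∃ m : ℕ, (n:ℤ) - 1 ≤ (m:ℤ) ∧ (m:ℤ) ≤ (n:ℤ) + σ + τ ∧
      ((σ:ℤ) + τ) ∣ ((m:ℤ) * τ - a) := by
  set e : ℤ := ((Nat.gcd σ τ : ℕ) : ℤ) with he
  set g : ℤ := (σ:ℤ) + τ with hg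
  have he1 : 1 ≤ e := by
    rw [he]
    have h : 1 ≤ Nat.gcd σ τ := Nat.gcd_pos_of_pos_left τ (by omega : 0 < σ)
    exact_mod_cast h
  have heσ : e ∣ (σ:ℤ) := Int.natCast_dvd_natCast.mpr (Nat.gcd_dvd_left σ τ)
  have heτ : e ∣ (τ:ℤ) := Int.natCast_dvd_natCast.mpr (Nat.gcd_dvd_right σ τ)
  have heg : e ∣ g := dvd_add heσ heτ
  have hbez : e = (σ:ℤ) * Nat.gcdA σ τ + (τ:ℤ) * Nat.gcdB σ τ := Nat.gcd_eq_gcd_ab σ τ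
  set α := Nat.gcdA σ τ
  set β := Nat.gcdB σ τ
  set m₀ : ℤ := (β - α) * (a / e) with hm₀
  have key : g ∣ (m₀ * τ - a) := by
    have hae : (a / e) * e = a := Int.ediv_mul_cancel ha
    have : m₀ * τ - a = -(g * (α * (a / e))) := by
      have : (τ:ℤ) * (β - α) = e - g * α := by rw [hbez, hg]; ring
      calc m₀ * τ - a = (τ * (β - α)) * (a/e) - a := by rw [hm₀]; ring
        _ = (e - g * α) * (a/e) - a := by rw [this]
        _ = (a/e) * e - a - g * (α * (a/e)) := by ring
        _ = -(g * (α * (a/e))) := by rw [hae]; ring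
    rw [this]; exact (dvd_mul_right g _).neg_right
  set q : ℤ := g / e with hq
  have hqe : q * e = g := Int.ediv_mul_cancel heg
  have hq1 : 1 ≤ q := by
    rcases lt_or_ge q 1 with h | h
    · exfalso; nlinarith
    · exact h
  have hq0 : q ≠ 0 := by omega
  set r : ℤ := (m₀ - ((n:ℤ) - 1)) % q with hr
  have hr0 : 0 ≤ r := Int.emod_nonneg _ hq0
  have hrq : r < q := Int.emod_lt_of_pos _ (by omega)
  set mz : ℤ := (n:ℤ) - 1 + r with hmz
  have hmz0 : 0 ≤ mz := by
    have : (1:ℤ) ≤ (n:ℤ) := by exact_mod_cast hn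
    omega
  refine ⟨mz.toNat, ?_, ?_, ?_⟩
  · rw [Int.toNat_of_nonneg hmz0]; omega
  · rw [Int.toNat_of_nonneg hmz0]
    have hgq : q ≤ g := by nlinarith [hqe, he1, hq1]
    omega
  · rw [Int.toNat_of_nonneg hmz0]
    have hdiv : q ∣ (mz - m₀) := by
      have h1 : q ∣ (m₀ - ((n:ℤ)-1)) - r := Int.dvd_self_sub_of_emod_eq rfl
      have h2 : mz - m₀ = -((m₀ - ((n:ℤ)-1)) - r) := by rw [hmz]; ring
      rw [h2]; exact h1.neg_right
    obtain ⟨k, hk⟩ := hdiv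
    have hτe : e ∣ (τ:ℤ) := heτ
    obtain ⟨τ', hτ'⟩ := hτe
    have hgτq : (τ:ℤ) * q = τ' * g := by rw [hτ', ← hqe]; ring
    have : (mz:ℤ) * τ - a = (τ' * k) * g + (m₀ * τ - a) := by
      have : (mz:ℤ) * τ - a = (mz - m₀) * τ + (m₀ * τ - a) := by ring
      rw [this, hk]
      have : q * k * τ = (τ * q) * k := by ring
      rw [this, hgτq]; ring
    rw [this]
    exact dvd_add (Dvd.intro_left _ rfl) key

lemma gadget_up {n σ τ s' : ℕ} {S T : Finset ℕ} (hn : 1 ≤ n)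
    (hσS : σ ∈ S) (hτT : τ ∈ T) (hs'S : s' ∈ S)
    (hσ1 : 1 ≤ σ) (hτ1 : 1 ≤ τ) (hστ : σ + τ ≤ n) (hs'1 : 1 ≤ s') (hs'τ : s' + τ ≤ n)
    {c : ℤ} (hc : c ∈ Finset.Icc (1 : ℤ) (n : ℤ)) :
    ∃ (mm : ℕ) (c' : ℤ), HasWalk n S T mm c c' ∧ c' ∈ Finset.Icc (1 : ℤ) (n : ℤ) ∧
      (mm : ℤ) ≤ (n:ℤ) + σ + τ + 1 ∧
      ((σ:ℤ) + τ) ∣ (c' - c + (mm:ℤ) * τ - ((s':ℤ) + τ)) := by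
  set e : ℕ := Nat.gcd σ τ with he
  have he1 : 1 ≤ e := Nat.gcd_pos_of_pos_left τ (by omega)
  have heτ : e ≤ τ := Nat.le_of_dvd (by omega) (Nat.gcd_dvd_right σ τ)
  set p : ℤ := 1 + (c - 1) % (e:ℤ) with hp
  have hene : (e:ℤ) ≠ 0 := by exact_mod_cast (by omega : e ≠ 0)
  have hp1 : 1 ≤ p := by have := Int.emod_nonneg (c-1) hene; omega
  have hpe : p ≤ (e:ℤ) := by
    have := Int.emod_lt_of_pos (c-1) (by exact_mod_cast (by omega : 0 < e) : (0:ℤ) < e)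
    omega
  have hpn : p ≤ (n:ℤ) - s' := by
    have h1 : ((s':ℤ)) + τ ≤ n := by exact_mod_cast hs'τ
    have h2 : (e:ℤ) ≤ (τ:ℤ) := by exact_mod_cast heτ
    omega
  have hpmem : p ∈ Finset.Icc (1:ℤ) (n:ℤ) := by
    simp only [Finset.mem_Icc]
    have : (1:ℤ) ≤ s' := by exact_mod_cast hs'1
    omega
  have hecp : ((e:ℤ)) ∣ (c - p) := by
    have h1 : (e:ℤ) ∣ (c - 1) - (c-1) % e := Int.dvd_self_sub_of_emod_eq rfl
    have : c - p = (c-1) - (c-1) % e := by rw [hp]; ring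
    rw [this]; exact h1
  obtain ⟨m, hm1, hm2, hm3⟩ := solve_length n σ τ hn hσ1 hτ1 (c - p) hecp
  have hwalk1 : HasWalk n S T m c p := by
    refine swalk hσS hτT hσ1 hτ1 hστ hm1 hc hpmem ?_
    have : p - c + (m:ℤ) * τ = (m:ℤ)*τ - (c - p) := by ring
    rw [this]; exact hm3
  have harc : ToepArc n S T p (p + s') := by
    refine ⟨hpmem, ?_, Or.inl ⟨s', hs'S, rfl⟩⟩
    simp only [Finset.mem_Icc] at hpmem ⊢
    have : (1:ℤ) ≤ s' := by exact_mod_cast hs'1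
    omega
  refine ⟨m + 1, p + s', ?_, ?_, ?_, ?_⟩
  · exact hasWalk_trans hwalk1 (hasWalk_cons harc (hasWalk_zero n S T _))
  · simp only [Finset.mem_Icc] at hpmem ⊢
    have : (1:ℤ) ≤ s' := by exact_mod_cast hs'1
    omega
  · push_cast; omega
  · have : p + (s':ℤ) - c + ((m:ℤ)+1) * τ - ((s':ℤ) + τ) = (m:ℤ)*τ - (c - p) := by ring
    push_cast
    rw [this]; exact hm3

lemma gadget_down {n σ τ t' : ℕ} {S T : Finset ℕ} (hn : 1 ≤ n)
    (hσS : σ ∈ S) (hτT : τ ∈ T) (ht'T : t' ∈ T)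
    (hσ1 : 1 ≤ σ) (hτ1 : 1 ≤ τ) (hστ : σ + τ ≤ n) (ht'1 : 1 ≤ t') (hσt' : σ + t' ≤ n)
    {c : ℤ} (hc : c ∈ Finset.Icc (1 : ℤ) (n : ℤ)) :
    ∃ (mm : ℕ) (c' : ℤ), HasWalk n S T mm c c' ∧ c' ∈ Finset.Icc (1 : ℤ) (n : ℤ) ∧
      (mm : ℤ) ≤ (n:ℤ) + σ + τ + 1 ∧
      ((σ:ℤ) + τ) ∣ (c' - c + (mm:ℤ) * τ - ((τ:ℤ) - t')) := by
  set e : ℕ := Nat.gcd σ τ with he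
  have he1 : 1 ≤ e := Nat.gcd_pos_of_pos_left τ (by omega)
  have heσ : e ≤ σ := Nat.le_of_dvd (by omega) (Nat.gcd_dvd_left σ τ)
  set p : ℤ := (n:ℤ) - ((n:ℤ) - c) % (e:ℤ) with hp
  have hene : (e:ℤ) ≠ 0 := by exact_mod_cast (by omega : e ≠ 0)
  have hpn : p ≤ (n:ℤ) := by have := Int.emod_nonneg ((n:ℤ)-c) hene; omega
  have hpe : (n:ℤ) - e + 1 ≤ p := by
    have := Int.emod_lt_of_pos ((n:ℤ)-c) (by exact_mod_cast (by omega : 0 < e) : (0:ℤ) < e)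
    omega
  have hpt : (t':ℤ) + 1 ≤ p := by
    have h1 : ((σ:ℤ)) + t' ≤ n := by exact_mod_cast hσt'
    have h2 : (e:ℤ) ≤ (σ:ℤ) := by exact_mod_cast heσ
    omega
  have hpmem : p ∈ Finset.Icc (1:ℤ) (n:ℤ) := by
    simp only [Finset.mem_Icc]
    have : (1:ℤ) ≤ t' := by exact_mod_cast ht'1
    omega
  have hecp : ((e:ℤ)) ∣ (c - p) := by
    have h1 : (e:ℤ) ∣ ((n:ℤ) - c) - ((n:ℤ)-c) % e := Int.dvd_self_sub_of_emod_eq rfl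
    have : c - p = -(((n:ℤ) - c) - ((n:ℤ)-c) % e) := by rw [hp]; ring
    rw [this]; exact h1.neg_right
  obtain ⟨m, hm1, hm2, hm3⟩ := solve_length n σ τ hn hσ1 hτ1 (c - p) hecp
  have hwalk1 : HasWalk n S T m c p := by
    refine swalk hσS hτT hσ1 hτ1 hστ hm1 hc hpmem ?_
    have : p - c + (m:ℤ) * τ = (m:ℤ)*τ - (c - p) := by ring
    rw [this]; exact hm3
  have harc : ToepArc n S T p (p - t') := by
    refine ⟨hpmem, ?_, Or.inr ⟨t', ht'T, rfl⟩⟩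
    simp only [Finset.mem_Icc] at hpmem ⊢
    have : (1:ℤ) ≤ t' := by exact_mod_cast ht'1
    omega
  refine ⟨m + 1, p - t', ?_, ?_, ?_, ?_⟩
  · exact hasWalk_trans hwalk1 (hasWalk_cons harc (hasWalk_zero n S T _))
  · simp only [Finset.mem_Icc] at hpmem ⊢
    have : (1:ℤ) ≤ t' := by exact_mod_cast ht'1
    omega
  · push_cast; omega
  · have : p - (t':ℤ) - c + ((m:ℤ)+1) * τ - ((τ:ℤ) - t') = (m:ℤ)*τ - (c - p) := by ring
    push_cast
    rw [this]; exact hm3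

lemma chain_walk {n k₁ k₂ : ℕ} (s : Fin (k₁ + 1) → ℕ) (t : Fin (k₂ + 1) → ℕ)
    (hn : 1 ≤ n)
    (hs1 : ∀ j, 1 ≤ s j) (ht1 : ∀ k, 1 ≤ t k)
    (hsτ : ∀ j, s j + t 0 ≤ n) (hσt : ∀ k, s 0 + t k ≤ n) :
    ∀ (N : ℕ) (x : Fin (k₁ + 1) → ℕ) (y : Fin (k₂ + 1) → ℕ),
      (∑ j, x j) + (∑ k, y k) = N → ∀ c ∈ Finset.Icc (1 : ℤ) (n : ℤ),
      ∃ (M : ℕ) (c' : ℤ),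
        HasWalk n (Finset.image s Finset.univ) (Finset.image t Finset.univ) M c c' ∧
        c' ∈ Finset.Icc (1 : ℤ) (n : ℤ) ∧
        (M : ℤ) ≤ (N : ℤ) * ((n:ℤ) + s 0 + t 0 + 1) ∧
        ((s 0 : ℤ) + t 0) ∣ (c' - c + (M:ℤ) * (t 0) -
          ((∑ j, (x j : ℤ) * ((s j : ℤ) + (t 0 : ℤ)))
            + ∑ k, (y k : ℤ) * ((t 0 : ℤ) - (t k : ℤ)))) := by
  have hσS : s 0 ∈ Finset.image s Finset.univ := Finset.mem_image_of_mem s (Finset.mem_univ 0)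
  have hτT : t 0 ∈ Finset.image t Finset.univ := Finset.mem_image_of_mem t (Finset.mem_univ 0)
  have hστ : s 0 + t 0 ≤ n := hsτ 0
  intro N
  induction N with
  | zero =>
    intro x y hxy c hc
    have hx : ∀ j, x j = 0 := by
      intro j
      have h1 : ∑ j, x j = 0 := by omega
      exact Finset.sum_eq_zero_iff.mp h1 j (Finset.mem_univ j)
    have hy : ∀ k, y k = 0 := by
      intro k
      have h1 : ∑ k, y k = 0 := by omega
      exact Finset.sum_eq_zero_iff.mp h1 k (Finset.mem_univ k)
    refine ⟨0, c, hasWalk_zero _ _ _ _, hc, by simp, ?_⟩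
    simp [hx, hy]
  | succ N ih =>
    intro x y hxy c hc
    by_cases hex : ∃ j, 0 < x j
    · obtain ⟨j₀, hj₀⟩ := hex
      obtain ⟨mm, c₁, hw1, hc₁, hmm, hdvd1⟩ :=
        gadget_up hn hσS hτT (Finset.mem_image_of_mem s (Finset.mem_univ j₀))
          (hs1 0) (ht1 0) hστ (hs1 j₀) (hsτ j₀) hc
      set x' : Fin (k₁ + 1) → ℕ := Function.update x j₀ (x j₀ - 1) with hx'
      have hsum' : (∑ j, x' j) + (∑ k, y k) = N := by
        have h1 : ∑ j, x' j = (x j₀ - 1) + ∑ j ∈ Finset.univ \ {j₀}, x j :=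
          Finset.sum_update_of_mem (Finset.mem_univ j₀) x (x j₀ - 1)
        have h2 : ∑ j, x j = x j₀ + ∑ j ∈ Finset.univ \ {j₀}, x j := by
          rw [← Finset.sum_update_of_mem (Finset.mem_univ j₀) x (x j₀)]
          simp [Function.update_eq_self]
        omega
      obtain ⟨M', c', hw2, hc', hM', hdvd2⟩ := ih x' y hsum' c₁ hc₁
      refine ⟨mm + M', c', hasWalk_trans hw1 hw2, hc', ?_, ?_⟩
      · push_cast
        push_cast at hmm hM'
        nlinarith
      · have hVs : ∑ j, (x j : ℤ) * ((s j : ℤ) + (t 0 : ℤ))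
            = (∑ j, (x' j : ℤ) * ((s j : ℤ) + (t 0 : ℤ))) + ((s j₀ : ℤ) + (t 0 : ℤ)) := by
          have h1 : ∑ j, (x' j : ℤ) * ((s j : ℤ) + (t 0 : ℤ))
              = ((x j₀ - 1 : ℕ) : ℤ) * ((s j₀ : ℤ) + (t 0 : ℤ))
                + ∑ j ∈ Finset.univ \ {j₀}, (x j : ℤ) * ((s j : ℤ) + (t 0 : ℤ)) := by
            rw [← Finset.sum_update_of_mem (Finset.mem_univ j₀)
              (fun j => (x j : ℤ) * ((s j : ℤ) + (t 0 : ℤ)))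
              (((x j₀ - 1 : ℕ) : ℤ) * ((s j₀ : ℤ) + (t 0 : ℤ)))]
            apply Finset.sum_congr rfl
            intro j _
            by_cases hj : j = j₀
            · subst hj; simp [hx']
            · simp [hx', Function.update_of_ne hj]
          have h2 : ∑ j, (x j : ℤ) * ((s j : ℤ) + (t 0 : ℤ))
              = (x j₀ : ℤ) * ((s j₀ : ℤ) + (t 0 : ℤ))
                + ∑ j ∈ Finset.univ \ {j₀}, (x j : ℤ) * ((s j : ℤ) + (t 0 : ℤ)) := by
            rw [← Finset.sum_update_of_mem (Finset.mem_univ j₀)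
              (fun j => (x j : ℤ) * ((s j : ℤ) + (t 0 : ℤ)))
              ((x j₀ : ℤ) * ((s j₀ : ℤ) + (t 0 : ℤ)))]
            apply Finset.sum_congr rfl
            intro j _
            by_cases hj : j = j₀
            · subst hj; simp
            · simp [Function.update_of_ne hj]
          have hcast : ((x j₀ - 1 : ℕ) : ℤ) = (x j₀ : ℤ) - 1 := by
            push_cast [Nat.cast_sub (by omega : 1 ≤ x j₀)]; ring
          rw [h1, h2, hcast]; ring
        have heq : c' - c + ((mm:ℕ) + (M':ℕ) : ℤ) * (t 0) -
            ((∑ j, (x j : ℤ) * ((s j : ℤ) + (t 0 : ℤ)))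
              + ∑ k, (y k : ℤ) * ((t 0 : ℤ) - (t k : ℤ)))
            = (c₁ - c + (mm:ℤ) * (t 0) - ((s j₀ : ℤ) + (t 0 : ℤ)))
              + (c' - c₁ + (M':ℤ) * (t 0) -
                ((∑ j, (x' j : ℤ) * ((s j : ℤ) + (t 0 : ℤ)))
                  + ∑ k, (y k : ℤ) * ((t 0 : ℤ) - (t k : ℤ)))) := by
          rw [hVs]; push_cast; ring
        have := dvd_add hdvd1 hdvd2
        rw [← heq] at this
        push_cast; exact this
    · -- all x zero, find y k positive
      push_neg at hex
      have hxz : ∀ j, x j = 0 := fun j => by have := hex j; omega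
      have hey : ∃ k, 0 < y k := by
        by_contra hc0
        push_neg at hc0
        have : ∀ k, y k = 0 := fun k => by have := hc0 k; omega
        have h1 : ∑ j, x j = 0 := Finset.sum_eq_zero (fun j _ => hxz j)
        have h2 : ∑ k, y k = 0 := Finset.sum_eq_zero (fun k _ => this k)
        omega
      obtain ⟨k₀, hk₀⟩ := hey
      obtain ⟨mm, c₁, hw1, hc₁, hmm, hdvd1⟩ :=
        gadget_down hn hσS hτT (Finset.mem_image_of_mem t (Finset.mem_univ k₀))
          (hs1 0) (ht1 0) hστ (ht1 k₀) (hσt k₀) hc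
      set y' : Fin (k₂ + 1) → ℕ := Function.update y k₀ (y k₀ - 1) with hy'
      have hsum' : (∑ j, x j) + (∑ k, y' k) = N := by
        have h1 : ∑ k, y' k = (y k₀ - 1) + ∑ k ∈ Finset.univ \ {k₀}, y k :=
          Finset.sum_update_of_mem (Finset.mem_univ k₀) y (y k₀ - 1)
        have h2 : ∑ k, y k = y k₀ + ∑ k ∈ Finset.univ \ {k₀}, y k := by
          rw [← Finset.sum_update_of_mem (Finset.mem_univ k₀) y (y k₀)]
          simp [Function.update_eq_self]
        omega
      obtain ⟨M', c', hw2, hc', hM', hdvd2⟩ := ih x y' hsum' c₁ hc₁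
      refine ⟨mm + M', c', hasWalk_trans hw1 hw2, hc', ?_, ?_⟩
      · push_cast
        push_cast at hmm hM'
        nlinarith
      · have hVs : ∑ k, (y k : ℤ) * ((t 0 : ℤ) - (t k : ℤ))
            = (∑ k, (y' k : ℤ) * ((t 0 : ℤ) - (t k : ℤ))) + ((t 0 : ℤ) - (t k₀ : ℤ)) := by
          have h1 : ∑ k, (y' k : ℤ) * ((t 0 : ℤ) - (t k : ℤ))
              = ((y k₀ - 1 : ℕ) : ℤ) * ((t 0 : ℤ) - (t k₀ : ℤ))
                + ∑ k ∈ Finset.univ \ {k₀}, (y k : ℤ) * ((t 0 : ℤ) - (t k : ℤ)) := by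
            rw [← Finset.sum_update_of_mem (Finset.mem_univ k₀)
              (fun k => (y k : ℤ) * ((t 0 : ℤ) - (t k : ℤ)))
              (((y k₀ - 1 : ℕ) : ℤ) * ((t 0 : ℤ) - (t k₀ : ℤ)))]
            apply Finset.sum_congr rfl
            intro k _
            by_cases hk : k = k₀
            · subst hk; simp [hy']
            · simp [hy', Function.update_of_ne hk]
          have h2 : ∑ k, (y k : ℤ) * ((t 0 : ℤ) - (t k : ℤ))
              = (y k₀ : ℤ) * ((t 0 : ℤ) - (t k₀ : ℤ))
                + ∑ k ∈ Finset.univ \ {k₀}, (y k : ℤ) * ((t 0 : ℤ) - (t k : ℤ)) := by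
            rw [← Finset.sum_update_of_mem (Finset.mem_univ k₀)
              (fun k => (y k : ℤ) * ((t 0 : ℤ) - (t k : ℤ)))
              ((y k₀ : ℤ) * ((t 0 : ℤ) - (t k₀ : ℤ)))]
            apply Finset.sum_congr rfl
            intro k _
            by_cases hk : k = k₀
            · subst hk; simp
            · simp [Function.update_of_ne hk]
          have hcast : ((y k₀ - 1 : ℕ) : ℤ) = (y k₀ : ℤ) - 1 := by
            push_cast [Nat.cast_sub (by omega : 1 ≤ y k₀)]; ring
          rw [h1, h2, hcast]; ring
        have heq : c' - c + ((mm:ℕ) + (M':ℕ) : ℤ) * (t 0) -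
            ((∑ j, (x j : ℤ) * ((s j : ℤ) + (t 0 : ℤ)))
              + ∑ k, (y k : ℤ) * ((t 0 : ℤ) - (t k : ℤ)))
            = (c₁ - c + (mm:ℤ) * (t 0) - ((t 0 : ℤ) - (t k₀ : ℤ)))
              + (c' - c₁ + (M':ℤ) * (t 0) -
                ((∑ j, (x j : ℤ) * ((s j : ℤ) + (t 0 : ℤ)))
                  + ∑ k, (y' k : ℤ) * ((t 0 : ℤ) - (t k : ℤ)))) := by
          rw [hVs]; push_cast; ring
        have := dvd_add hdvd1 hdvd2
        rw [← heq] at this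
        push_cast; exact this

lemma finset_gcd_bezout {ι : Type*} [DecidableEq ι] (F : Finset ι) (f : ι → ℕ) :
    ∃ c : ι → ℤ, ((F.gcd f : ℕ) : ℤ) = ∑ p ∈ F, c p * (f p : ℤ) := by
  induction F using Finset.induction_on with
  | empty => exact ⟨fun _ => 0, by simp⟩
  | insert a F' ha ih =>
    obtain ⟨c, hc⟩ := ih
    have hgi : (insert a F').gcd f = Nat.gcd (f a) (F'.gcd f) := Finset.gcd_insert
    refine ⟨fun p => if p = a then Nat.gcdA (f a) (F'.gcd f)
      else Nat.gcdB (f a) (F'.gcd f) * c p, ?_⟩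
    rw [hgi, Finset.sum_insert ha]
    have hbez := Nat.gcd_eq_gcd_ab (f a) (F'.gcd f)
    simp only [if_pos rfl]
    have hrest : ∑ p ∈ F', (if p = a then Nat.gcdA (f a) (F'.gcd f)
        else Nat.gcdB (f a) (F'.gcd f) * c p) * (f p : ℤ)
        = Nat.gcdB (f a) (F'.gcd f) * ∑ p ∈ F', c p * (f p : ℤ) := by
      rw [Finset.mul_sum]
      apply Finset.sum_congr rfl
      intro p hp
      have : p ≠ a := fun h => ha (h ▸ hp)
      simp [this]; ring
    rw [hrest, ← hc, hbez]; simp only [if_true]; ring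

lemma exists_xy {k₁ k₂ : ℕ} (s : Fin (k₁ + 1) → ℕ) (t : Fin (k₂ + 1) → ℕ) (d : ℕ)
    (hd : d = Finset.univ.gcd (fun p : Fin (k₁ + 1) × Fin (k₂ + 1) => s p.1 + t p.2))
    (z : ℤ) (hz : (d : ℤ) ∣ z) (hg2 : 1 ≤ s 0 + t 0) :
    ∃ (x : Fin (k₁ + 1) → ℕ) (y : Fin (k₂ + 1) → ℕ),
      (∀ j, (x j : ℤ) < (s 0 : ℤ) + t 0) ∧ (∀ k, (y k : ℤ) < (s 0 : ℤ) + t 0) ∧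
      ((s 0 : ℤ) + t 0) ∣
        ((∑ j, (x j : ℤ) * ((s j : ℤ) + t 0)) - (∑ k, (y k : ℤ) * ((s 0 : ℤ) + t k)) - z) := by
  set g : ℤ := (s 0 : ℤ) + t 0 with hgdef
  have hg0 : 0 < g := by
    have : (1:ℤ) ≤ (s 0 : ℤ) + t 0 := by exact_mod_cast hg2
    omega
  obtain ⟨c, hc⟩ := finset_gcd_bezout Finset.univ
    (fun p : Fin (k₁ + 1) × Fin (k₂ + 1) => s p.1 + t p.2)
  rw [← hd] at hc
  obtain ⟨w, hw⟩ := hz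
  -- z = ∑_p (w * c p) * (s p.1 + t p.2)
  have hz' : z = ∑ p : Fin (k₁ + 1) × Fin (k₂ + 1),
      (w * c p) * ((s p.1 : ℤ) + (t p.2 : ℤ)) := by
    rw [hw, hc, Finset.sum_mul]
    apply Finset.sum_congr rfl
    intro p _
    push_cast; ring
  set u : Fin (k₁ + 1) → ℤ := fun j => ∑ k, w * c (j, k) with hu
  set v : Fin (k₂ + 1) → ℤ := fun k => ∑ j, w * c (j, k) with hv
  set W : ℤ := ∑ p : Fin (k₁ + 1) × Fin (k₂ + 1), w * c p with hW
  have hsplit : z = (∑ j, u j * ((s j : ℤ) + t 0)) + (∑ k, v k * ((s 0 : ℤ) + t k)) - W * g := by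
    rw [hz']
    have h1 : ∑ j, u j * ((s j : ℤ) + t 0)
        = ∑ p : Fin (k₁ + 1) × Fin (k₂ + 1), (w * c p) * ((s p.1 : ℤ) + t 0) := by
      rw [Fintype.sum_prod_type]
      apply Finset.sum_congr rfl
      intro j _
      rw [hu, Finset.sum_mul]
    have h2 : ∑ k, v k * ((s 0 : ℤ) + t k)
        = ∑ p : Fin (k₁ + 1) × Fin (k₂ + 1), (w * c p) * ((s 0 : ℤ) + t p.2) := by
      rw [Fintype.sum_prod_type_right]
      apply Finset.sum_congr rfl
      intro k _
      rw [hv, Finset.sum_mul]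
    have h3 : W * g = ∑ p : Fin (k₁ + 1) × Fin (k₂ + 1), (w * c p) * g := by
      rw [hW, Finset.sum_mul]
    rw [h1, h2, h3, ← Finset.sum_add_distrib, ← Finset.sum_sub_distrib]
    apply Finset.sum_congr rfl
    intro p _
    rw [hgdef]; ring
  set x : Fin (k₁ + 1) → ℕ := fun j => ((u j) % g).toNat with hx
  set y : Fin (k₂ + 1) → ℕ := fun k => ((-(v k)) % g).toNat with hy
  have hgne : g ≠ 0 := by omega
  have hxc : ∀ j, (x j : ℤ) = (u j) % g := fun j =>
    Int.toNat_of_nonneg (Int.emod_nonneg _ hgne)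
  have hyc : ∀ k, (y k : ℤ) = (-(v k)) % g := fun k =>
    Int.toNat_of_nonneg (Int.emod_nonneg _ hgne)
  refine ⟨x, y, ?_, ?_, ?_⟩
  · intro j; rw [hxc j]; exact Int.emod_lt_of_pos _ hg0
  · intro k; rw [hyc k]; exact Int.emod_lt_of_pos _ hg0
  · have hxj : ∀ j, g ∣ ((x j : ℤ) - u j) := by
      intro j; rw [hxc j]
      have h9 : (u j) % g - u j = -(u j - (u j) % g) := by ring
      rw [h9]
      exact (Int.dvd_self_sub_of_emod_eq rfl).neg_right
    have hyk : ∀ k, g ∣ ((y k : ℤ) + v k) := by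
      intro k; rw [hyc k]
      have : (-(v k)) % g + v k = -((-(v k)) - (-(v k)) % g) := by ring
      rw [this]
      exact (Int.dvd_self_sub_of_emod_eq rfl).neg_right
    have key : (∑ j, (x j : ℤ) * ((s j : ℤ) + t 0)) - (∑ k, (y k : ℤ) * ((s 0 : ℤ) + t k)) - z
        = (∑ j, ((x j : ℤ) - u j) * ((s j : ℤ) + t 0))
          - (∑ k, ((y k : ℤ) + v k) * ((s 0 : ℤ) + t k)) + W * g := by
      rw [hsplit]
      simp only [sub_mul, add_mul, Finset.sum_sub_distrib, Finset.sum_add_distrib]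
      ring
    rw [key]
    refine dvd_add (dvd_sub ?_ ?_) (Dvd.intro_left W rfl)
    · exact Finset.dvd_sum (fun j _ => Dvd.dvd.mul_right (hxj j) _)
    · exact Finset.dvd_sum (fun k _ => Dvd.dvd.mul_right (hyk k) _)

lemma walk_counts {n k₁ k₂ : ℕ} (s : Fin (k₁ + 1) → ℕ) (t : Fin (k₂ + 1) → ℕ) :
    ∀ (m : ℕ) (u v : ℤ),
      HasWalk n (Finset.image s Finset.univ) (Finset.image t Finset.univ) m u v →
      ∃ (a : Fin (k₁ + 1) → ℕ) (b : Fin (k₂ + 1) → ℕ),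
        (∑ j, a j) + (∑ k, b k) = m ∧
        v - u = (∑ j, (a j : ℤ) * (s j : ℤ)) - ∑ k, (b k : ℤ) * (t k : ℤ) := by
  intro m
  induction m with
  | zero =>
    intro u v hw
    obtain ⟨w, hw0, hwm, _⟩ := hw
    exact ⟨fun _ => 0, fun _ => 0, by simp, by simp [← hw0, ← hwm]⟩
  | succ m ih =>
    intro u v hw
    obtain ⟨w, hw0, hwm, hwa⟩ := hw
    have htail : HasWalk n (Finset.image s Finset.univ) (Finset.image t Finset.univ)
        m (w 1) v := by
      refine ⟨fun q => w (q + 1), rfl, hwm, ?_⟩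
      intro i hi
      exact hwa (i + 1) (by omega)
    obtain ⟨a, b, hab, habv⟩ := ih (w 1) v htail
    have harc := hwa 0 (by omega)
    rw [hw0] at harc
    obtain ⟨-, -, harc⟩ := harc
    rcases harc with ⟨s', hs', heq⟩ | ⟨t', ht', heq⟩
    · obtain ⟨j₀, -, rfl⟩ := Finset.mem_image.mp hs'
      refine ⟨Function.update a j₀ (a j₀ + 1), b, ?_, ?_⟩
      · have h1 : ∑ j, Function.update a j₀ (a j₀ + 1) j
            = (a j₀ + 1) + ∑ j ∈ Finset.univ \ {j₀}, a j :=
          Finset.sum_update_of_mem (Finset.mem_univ j₀) a _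
        have h2 : ∑ j, a j = a j₀ + ∑ j ∈ Finset.univ \ {j₀}, a j := by
          rw [← Finset.sum_update_of_mem (Finset.mem_univ j₀) a (a j₀)]
          simp [Function.update_eq_self]
        omega
      · have h1 : ∑ j, ((Function.update a j₀ (a j₀ + 1) j : ℕ) : ℤ) * (s j : ℤ)
            = ((a j₀ + 1 : ℕ) : ℤ) * (s j₀ : ℤ)
              + ∑ j ∈ Finset.univ \ {j₀}, (a j : ℤ) * (s j : ℤ) := by
          rw [← Finset.sum_update_of_mem (Finset.mem_univ j₀)
            (fun j => (a j : ℤ) * (s j : ℤ)) (((a j₀ + 1 : ℕ) : ℤ) * (s j₀ : ℤ))]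
          apply Finset.sum_congr rfl
          intro j _
          by_cases hj : j = j₀
          · subst hj; simp
          · simp [Function.update_of_ne hj]
        have h2 : ∑ j, (a j : ℤ) * (s j : ℤ)
            = (a j₀ : ℤ) * (s j₀ : ℤ) + ∑ j ∈ Finset.univ \ {j₀}, (a j : ℤ) * (s j : ℤ) := by
          rw [← Finset.sum_update_of_mem (Finset.mem_univ j₀)
            (fun j => (a j : ℤ) * (s j : ℤ)) ((a j₀ : ℤ) * (s j₀ : ℤ))]
          apply Finset.sum_congr rfl
          intro j _
          by_cases hj : j = j₀
          · subst hj; simp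
          · simp [Function.update_of_ne hj]
        rw [h1]
        rw [h2] at habv
        have heq' : w 1 = u + (s j₀ : ℤ) := heq
        have hv : v - u = (v - w 1) + (w 1 - u) := by ring
        rw [hv, habv, heq']
        push_cast; ring
    · obtain ⟨k₀, -, rfl⟩ := Finset.mem_image.mp ht'
      refine ⟨a, Function.update b k₀ (b k₀ + 1), ?_, ?_⟩
      · have h1 : ∑ k, Function.update b k₀ (b k₀ + 1) k
            = (b k₀ + 1) + ∑ k ∈ Finset.univ \ {k₀}, b k :=
          Finset.sum_update_of_mem (Finset.mem_univ k₀) b _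
        have h2 : ∑ k, b k = b k₀ + ∑ k ∈ Finset.univ \ {k₀}, b k := by
          rw [← Finset.sum_update_of_mem (Finset.mem_univ k₀) b (b k₀)]
          simp [Function.update_eq_self]
        omega
      · have h1 : ∑ k, ((Function.update b k₀ (b k₀ + 1) k : ℕ) : ℤ) * (t k : ℤ)
            = ((b k₀ + 1 : ℕ) : ℤ) * (t k₀ : ℤ)
              + ∑ k ∈ Finset.univ \ {k₀}, (b k : ℤ) * (t k : ℤ) := by
          rw [← Finset.sum_update_of_mem (Finset.mem_univ k₀)
            (fun k => (b k : ℤ) * (t k : ℤ)) (((b k₀ + 1 : ℕ) : ℤ) * (t k₀ : ℤ))]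
          apply Finset.sum_congr rfl
          intro k _
          by_cases hk : k = k₀
          · subst hk; simp
          · simp [Function.update_of_ne hk]
        have h2 : ∑ k, (b k : ℤ) * (t k : ℤ)
            = (b k₀ : ℤ) * (t k₀ : ℤ) + ∑ k ∈ Finset.univ \ {k₀}, (b k : ℤ) * (t k : ℤ) := by
          rw [← Finset.sum_update_of_mem (Finset.mem_univ k₀)
            (fun k => (b k : ℤ) * (t k : ℤ)) ((b k₀ : ℤ) * (t k₀ : ℤ))]
          apply Finset.sum_congr rfl
          intro k _
          by_cases hk : k = k₀
          · subst hk; simp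
          · simp [Function.update_of_ne hk]
        rw [h1]
        rw [h2] at habv
        have heq' : w 1 = u - (t k₀ : ℤ) := heq
        have hv : v - u = (v - w 1) + (w 1 - u) := by ring
        rw [hv, habv, heq']
        push_cast; ring

/-- If `max S + min T ≤ n` and `min S + max T ≤ n`, then there is a
positive integer `M` such that `P_i = Q_i = R_i` for every `i ≥ M`. -/
theorem eventually_P_eq_Q_eq_R (n k₁ k₂ : ℕ) (hn : 2 ≤ n)
    (s : Fin (k₁ + 1) → ℕ) (t : Fin (k₂ + 1) → ℕ)
    (hs : StrictMono s) (ht : StrictMono t)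
    (hsmem : ∀ i, s i ∈ Finset.Icc 1 (n - 1)) (htmem : ∀ j, t j ∈ Finset.Icc 1 (n - 1))
    (hST1 : s (Fin.last k₁) + t 0 ≤ n) (hST2 : s 0 + t (Fin.last k₂) ≤ n)
    (d : ℕ)
    (hd : d = Finset.univ.gcd (fun p : Fin (k₁ + 1) × Fin (k₂ + 1) => s p.1 + t p.2))
    (P Q R : ℕ → Set ℤ)
    (hP : ∀ i, P i =
      {ℓ : ℤ | -((n : ℤ) - 1) ≤ ℓ ∧ ℓ ≤ (n : ℤ) - 1 ∧ (d : ℤ) ∣ ℓ - (i : ℤ) * (s 0 : ℤ)})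
    (hQ : ∀ i, Q i =
      {ℓ : ℤ | -((n : ℤ) - 1) ≤ ℓ ∧ ℓ ≤ (n : ℤ) - 1 ∧
        ∃ a : Fin (k₁ + 1) → ℕ, ∃ b : Fin (k₂ + 1) → ℕ,
          (∑ j, a j) + (∑ j, b j) = i ∧
          ℓ = ∑ j, (a j : ℤ) * (s j : ℤ) - ∑ j, (b j : ℤ) * (t j : ℤ)})
    (hR : ∀ i, R i =
      {ℓ : ℤ | -((n : ℤ) - 1) ≤ ℓ ∧ ℓ ≤ (n : ℤ) - 1 ∧
        ∀ u v : ℤ, u ∈ Finset.Icc (1 : ℤ) (n : ℤ) → v ∈ Finset.Icc (1 : ℤ) (n : ℤ) →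
          v - u = ℓ →
          HasWalk n (Finset.image s Finset.univ) (Finset.image t Finset.univ) i u v}) :
    ∃ M : ℕ, 0 < M ∧ ∀ i : ℕ, M ≤ i → P i = Q i ∧ Q i = R i := by
  -- basic facts
  have hs1 : ∀ j, 1 ≤ s j := fun j => (Finset.mem_Icc.mp (hsmem j)).1
  have hsn : ∀ j, s j + 1 ≤ n := fun j => by
    have := (Finset.mem_Icc.mp (hsmem j)).2; omega
  have ht1 : ∀ k, 1 ≤ t k := fun k => (Finset.mem_Icc.mp (htmem k)).1
  have htn : ∀ k, t k + 1 ≤ n := fun k => by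
    have := (Finset.mem_Icc.mp (htmem k)).2; omega
  have hsτ : ∀ j, s j + t 0 ≤ n := fun j =>
    le_trans (Nat.add_le_add_right (hs.monotone (Fin.le_last j)) _) hST1
  have hσt : ∀ k, s 0 + t k ≤ n := fun k =>
    le_trans (Nat.add_le_add_left (ht.monotone (Fin.le_last k)) _) hST2
  have hστ : s 0 + t 0 ≤ n := hsτ 0
  have hd_st : ∀ (j : Fin (k₁ + 1)) (k : Fin (k₂ + 1)), (d:ℤ) ∣ ((s j : ℤ) + (t k : ℤ)) := by
    intro j k
    have : d ∣ s j + t k := hd ▸ Finset.gcd_dvd (Finset.mem_univ (j, k))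
    have := Int.natCast_dvd_natCast.mpr this
    push_cast at this; exact this
  have hσS : s 0 ∈ Finset.image s Finset.univ := Finset.mem_image_of_mem s (Finset.mem_univ 0)
  have hτT : t 0 ∈ Finset.image t Finset.univ := Finset.mem_image_of_mem t (Finset.mem_univ 0)
  set K : ℕ := (k₁ + k₂ + 2) * n * (3 * n) with hK
  refine ⟨K + 2 * n, by omega, ?_⟩
  intro i hi
  -- Q ⊆ P
  have hQP : Q i ⊆ P i := by
    intro ℓ hℓ
    rw [hQ i] at hℓ
    obtain ⟨hb1, hb2, a, b, hab, heq⟩ := hℓ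
    rw [hP i]
    refine ⟨hb1, hb2, ?_⟩
    have hicast : (i : ℤ) = (∑ j, (a j : ℤ)) + ∑ k, (b k : ℤ) := by
      rw [← hab]; push_cast; ring
    have hexp : ℓ - (i:ℤ) * (s 0 : ℤ)
        = (∑ j, (a j : ℤ) * ((s j : ℤ) - (s 0 : ℤ)))
          - ∑ k, (b k : ℤ) * ((t k : ℤ) + (s 0 : ℤ)) := by
      rw [heq, hicast]
      simp only [mul_sub, mul_add, add_mul, Finset.sum_sub_distrib, Finset.sum_add_distrib,
        Finset.sum_mul]
      ring
    rw [hexp]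
    refine dvd_sub (Finset.dvd_sum fun j _ => Dvd.dvd.mul_left ?_ _)
      (Finset.dvd_sum fun k _ => Dvd.dvd.mul_left ?_ _)
    · have h1 := hd_st j 0
      have h2 := hd_st 0 0
      have : (s j : ℤ) - (s 0 : ℤ) = ((s j : ℤ) + (t 0 : ℤ)) - ((s 0 : ℤ) + (t 0 : ℤ)) := by
        ring
      rw [this]; exact dvd_sub h1 h2
    · have h1 := hd_st 0 k
      have : (t k : ℤ) + (s 0 : ℤ) = (s 0 : ℤ) + (t k : ℤ) := by ring
      rw [this]; exact h1
  -- R ⊆ Q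
  have hRQ : R i ⊆ Q i := by
    intro ℓ hℓ
    rw [hR i] at hℓ
    obtain ⟨hb1, hb2, hwalk⟩ := hℓ
    rw [hQ i]
    refine ⟨hb1, hb2, ?_⟩
    have hn1 : (1:ℤ) ≤ (n:ℤ) := by exact_mod_cast (by omega : 1 ≤ n)
    by_cases hl : 0 ≤ ℓ
    · have hmem1 : (1:ℤ) ∈ Finset.Icc (1:ℤ) (n:ℤ) := by simp [Finset.mem_Icc]; omega
      have hmem2 : (1:ℤ) + ℓ ∈ Finset.Icc (1:ℤ) (n:ℤ) := by
        simp [Finset.mem_Icc]; omega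
      obtain ⟨a, b, hab, habv⟩ := walk_counts s t i 1 (1 + ℓ)
        (hwalk 1 (1 + ℓ) hmem1 hmem2 (by ring))
      exact ⟨a, b, hab, by rw [← habv]; ring⟩
    · push_neg at hl
      have hmem1 : (1:ℤ) - ℓ ∈ Finset.Icc (1:ℤ) (n:ℤ) := by
        simp [Finset.mem_Icc]; omega
      have hmem2 : (1:ℤ) ∈ Finset.Icc (1:ℤ) (n:ℤ) := by simp [Finset.mem_Icc]; omega
      obtain ⟨a, b, hab, habv⟩ := walk_counts s t i (1 - ℓ) 1
        (hwalk (1 - ℓ) 1 hmem1 hmem2 (by ring))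
      exact ⟨a, b, hab, by rw [← habv]; ring⟩
  -- P ⊆ R
  have hPR : P i ⊆ R i := by
    intro ℓ hℓ
    rw [hP i] at hℓ
    obtain ⟨hb1, hb2, hdvd⟩ := hℓ
    rw [hR i]
    refine ⟨hb1, hb2, ?_⟩
    intro u v hu hv huv
    set z : ℤ := ℓ + (i:ℤ) * (t 0 : ℤ) with hz
    have hdz : (d:ℤ) ∣ z := by
      have h1 : z = (ℓ - (i:ℤ) * (s 0:ℤ)) + (i:ℤ) * ((s 0:ℤ) + (t 0:ℤ)) := by
        rw [hz]; ring
      rw [h1]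
      exact dvd_add hdvd (Dvd.dvd.mul_left (hd_st 0 0) _)
    obtain ⟨x, y, hxb, hyb, hE⟩ := exists_xy s t d hd z hdz
      (by have := hs1 0; have := ht1 0; omega)
    obtain ⟨M₁, c', hw1, hc', hM₁, hD⟩ :=
      chain_walk s t (by omega) hs1 ht1 hsτ hσt ((∑ j, x j) + ∑ k, y k) x y rfl u hu
    -- bounds
    have hστz : ((s 0:ℤ) + (t 0:ℤ)) ≤ (n:ℤ) := by exact_mod_cast hστ
    have hxn : ∀ j, x j ≤ n := by
      intro j
      have := lt_of_lt_of_le (hxb j) hστz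
      exact_mod_cast le_of_lt this
    have hyn : ∀ k, y k ≤ n := by
      intro k
      have := lt_of_lt_of_le (hyb k) hστz
      exact_mod_cast le_of_lt this
    have hNx : ∑ j, x j ≤ (k₁ + 1) * n := by
      calc ∑ j, x j ≤ ∑ _j : Fin (k₁+1), n := Finset.sum_le_sum (fun j _ => hxn j)
        _ = (k₁ + 1) * n := by simp [Finset.sum_const, Finset.card_univ]
    have hNy : ∑ k, y k ≤ (k₂ + 1) * n := by
      calc ∑ k, y k ≤ ∑ _k : Fin (k₂+1), n := Finset.sum_le_sum (fun k _ => hyn k)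
        _ = (k₂ + 1) * n := by simp [Finset.sum_const, Finset.card_univ]
    have hfac : n + s 0 + t 0 + 1 ≤ 3 * n := by
      have := hsn 0; have := htn 0; omega
    have hM₁n : M₁ ≤ ((∑ j, x j) + ∑ k, y k) * (n + s 0 + t 0 + 1) := by
      exact_mod_cast hM₁
    have hM₁K : M₁ ≤ K := by
      rw [hK]
      calc M₁ ≤ ((∑ j, x j) + ∑ k, y k) * (n + s 0 + t 0 + 1) := hM₁n
        _ ≤ ((k₁ + k₂ + 2) * n) * (3 * n) := by
            apply Nat.mul_le_mul _ hfac
            calc (∑ j, x j) + ∑ k, y k ≤ (k₁ + 1) * n + (k₂ + 1) * n := by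
                  exact Nat.add_le_add hNx hNy
              _ = (k₁ + k₂ + 2) * n := by ring
        _ = (k₁ + k₂ + 2) * n * (3 * n) := by ring
    have hM₁i : M₁ ≤ i := by omega
    have hmfn : n ≤ i - M₁ := by omega
    have hmfz : (n:ℤ) - 1 ≤ ((i - M₁ : ℕ) : ℤ) := by
      have : (n:ℤ) ≤ ((i - M₁ : ℕ) : ℤ) := by exact_mod_cast hmfn
      omega
    have hcast : ((i - M₁ : ℕ) : ℤ) = (i:ℤ) - (M₁:ℤ) := by
      push_cast [Nat.cast_sub hM₁i]; ring
    -- final congruence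
    have hgy : (∑ k, (y k : ℤ)) * ((s 0:ℤ) + (t 0:ℤ))
        = (∑ k, (y k : ℤ) * ((s 0:ℤ) + (t k:ℤ)))
          + ∑ k, (y k : ℤ) * ((t 0:ℤ) - (t k:ℤ)) := by
      rw [Finset.sum_mul, ← Finset.sum_add_distrib]
      apply Finset.sum_congr rfl
      intro k _
      ring
    have key : v - c' + ((i - M₁ : ℕ) : ℤ) * (t 0 : ℤ)
        = -((∑ j, (x j : ℤ) * ((s j : ℤ) + (t 0:ℤ)))
            - (∑ k, (y k : ℤ) * ((s 0 : ℤ) + (t k:ℤ))) - z)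
          - (∑ k, (y k : ℤ)) * ((s 0:ℤ) + (t 0:ℤ))
          - (c' - u + (M₁:ℤ) * (t 0:ℤ) -
            ((∑ j, (x j : ℤ) * ((s j : ℤ) + (t 0 : ℤ)))
              + ∑ k, (y k : ℤ) * ((t 0 : ℤ) - (t k : ℤ)))) := by
      rw [hcast, hgy, hz, ← huv]
      ring
    have hdvd_fin : ((s 0:ℤ) + (t 0:ℤ)) ∣ (v - c' + ((i - M₁ : ℕ) : ℤ) * (t 0 : ℤ)) := by
      rw [key]
      exact dvd_sub (dvd_sub hE.neg_right (Dvd.intro_left _ rfl)) hD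
    have hw2 := swalk hσS hτT (hs1 0) (ht1 0) hστ hmfz hc' hv hdvd_fin
    have := hasWalk_trans hw1 hw2
    rwa [Nat.add_sub_cancel' hM₁i] at this
  constructor
  · exact subset_antisymm (hPR.trans hRQ) hQP
  · exact subset_antisymm (hQP.trans hPR) hRQ
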